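/- Let q be a nonzero element of a field K with q^2 ≠ 1 and q^{2i} ≠ 1 for 1 ≤ i ≤ d. Let m be a nonnegative integer with 2m + 1 ≤ d. Then ∏_{0 ≤ ℓ < k ≤ m} (q^{2(2ℓ+1)} - q^{2(2k)})/(q^{2(2ℓ)} - q^{2(2k+1)}) = ∏_{k=0}^{m} 1/[2k+1]_q. -/

import Mathlib

open Finset

/-- The symmetric q-integer `[n]_q = q^{n-1} + q^{n-3} + ... + q^{1-n}`. -/
def qint {K : Type*} [Field K] (q : K) (n : ℕ) : K :=
  ∑ i ∈ Finset.range n, q ^ (n - 1 - i) * q⁻¹ ^ i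

lemma qint_succ {K : Type*} [Field K] (q : K) (n : ℕ) :
    qint q (n + 1) = q⁻¹ * qint q n + q ^ n := by
  rw [qint, Finset.sum_range_succ']
  simp only [Nat.add_sub_cancel, Nat.sub_zero, pow_zero, mul_one]
  rw [qint, Finset.mul_sum]
  congr 1
  apply Finset.sum_congr rfl
  intro i hi
  have he : n - (i + 1) = n - 1 - i := by
    simp only [Finset.mem_range] at hi; omega
  rw [he, pow_succ]
  ring

lemma qint_formula {K : Type*} [Field K] (q : K) (n : ℕ) :
    (q - q⁻¹) * qint q n = q ^ n - q⁻¹ ^ n := by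
  induction n with
  | zero => simp [qint]
  | succ n ih =>
    rw [qint_succ]
    have : (q - q⁻¹) * (q⁻¹ * qint q n + q ^ n)
        = q⁻¹ * ((q - q⁻¹) * qint q n) + (q - q⁻¹) * q ^ n := by ring
    rw [this, ih]
    have hq : q = 0 ∨ q ≠ 0 := em _
    rcases hq with h | h
    · simp [h]
    · ring

lemma sub_pow_ne {K : Type*} [Field K] {q : K} (hq : q ≠ 0) {n : ℕ}
    (h : q ^ (2 * n) ≠ 1) : q ^ n - q⁻¹ ^ n ≠ 0 := by
  intro hc
  apply h
  have h1 : q ^ n = q⁻¹ ^ n := sub_eq_zero.mp hc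
  have h2 : q ^ n * q⁻¹ ^ n = 1 := by
    rw [← mul_pow, mul_inv_cancel₀ hq, one_pow]
  rw [two_mul, pow_add]
  nth_rewrite 2 [h1]
  exact h2

lemma tele {K : Type*} [Field K] (G : ℕ → K) (n : ℕ) (h : ∀ i ≤ n, G i ≠ 0) :
    ∏ l ∈ Finset.range n, G (l + 1) / G l = G n / G 0 := by
  induction n with
  | zero => simp [div_self (h 0 (le_refl 0))]
  | succ n ih =>
    rw [Finset.prod_range_succ, ih (fun i hi => h i (by omega))]
    have hn : G n ≠ 0 := h n (by omega)
    have h0 : G 0 ≠ 0 := h 0 (by omega)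
    field_simp

/-- the telescoping product identity for powers of q². -/
theorem stmt12 {K : Type*} [Field K] (q : K) (hq : q ≠ 0)
    (h1 : q ^ 2 ≠ 1) (d : ℕ)
    (h2 : ∀ i : ℕ, 1 ≤ i → i ≤ d → q ^ (2 * i) ≠ 1)
    (m : ℕ) (hm : 2 * m + 1 ≤ d) :
    ∏ k ∈ Finset.range (m+1), ∏ l ∈ Finset.range k,
        (q ^ (2 * (2 * l + 1)) - q ^ (2 * (2 * k))) /
        (q ^ (2 * (2 * l)) - q ^ (2 * (2 * k + 1)))
      = ∏ k ∈ Finset.range (m+1), (qint q (2 * k + 1))⁻¹ := by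
  have hq1 : q - q⁻¹ ≠ 0 := by
    have := sub_pow_ne hq (n := 1) (by simpa [mul_one] using h1)
    simpa using this
  apply Finset.prod_congr rfl
  intro k hk
  have hkm : k ≤ m := by
    simp only [Finset.mem_range] at hk; omega
  -- nonvanishing of G l = q^(2*(k-l)+1) - q⁻¹^(2*(k-l)+1) for l ≤ k
  set G : ℕ → K := fun l => q ^ (2 * (k - l) + 1) - q⁻¹ ^ (2 * (k - l) + 1) with hG
  have hGne : ∀ l ≤ k, G l ≠ 0 := by
    intro l hl
    apply sub_pow_ne hq
    apply h2
    · omega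
    · omega
  -- rewrite each factor as G (l+1) / G l
  have hfac : ∀ l ∈ Finset.range k,
      (q ^ (2 * (2 * l + 1)) - q ^ (2 * (2 * k))) /
        (q ^ (2 * (2 * l)) - q ^ (2 * (2 * k + 1))) = G (l + 1) / G l := by
    intro l hl
    simp only [Finset.mem_range] at hl
    obtain ⟨j, rfl⟩ : ∃ j, k = l + 1 + j := ⟨k - l - 1, by omega⟩
    have e1 : l + 1 + j - (l + 1) = j := by omega
    have e2 : l + 1 + j - l = j + 1 := by omega
    simp only [hG, e1, e2]
    have hden1 : q ^ (2 * (2 * l)) - q ^ (2 * (2 * (l + 1 + j) + 1)) ≠ 0 := by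
      intro hc
      have h1 : q ^ (2 * (2 * l)) = q ^ (2 * (2 * (l + 1 + j) + 1)) :=
        sub_eq_zero.mp hc
      have hpow : q ^ (2 * (2 * l)) * q ^ (2 * (2 * j + 3)) = q ^ (2 * (2 * l)) := by
        rw [← pow_add]
        rw [h1]
        congr 1
        omega
      have hne : q ^ (2 * (2 * l)) ≠ 0 := pow_ne_zero _ hq
      have : q ^ (2 * (2 * j + 3)) = 1 :=
        mul_left_cancel₀ hne (hpow.trans (mul_one _).symm)
      exact h2 (2 * j + 3) (by omega) (by omega) this
    have hden2 : q ^ (2 * (j + 1) + 1) - q⁻¹ ^ (2 * (j + 1) + 1) ≠ 0 := by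
      apply sub_pow_ne hq
      apply h2 <;> omega
    rw [div_eq_div_iff hden1 hden2]
    have hinv : q⁻¹ = q ^ (0:ℕ) / q := by field_simp
    rw [hinv]
    rw [div_pow, div_pow]
    field_simp
    ring
  rw [Finset.prod_congr rfl hfac, tele G k hGne]
  have hG0 : G k = q - q⁻¹ := by simp [hG]
  have hGk : G 0 = q ^ (2 * k + 1) - q⁻¹ ^ (2 * k + 1) := by simp [hG]
  rw [hG0, hGk]
  have hqint : qint q (2 * k + 1) = (q ^ (2 * k + 1) - q⁻¹ ^ (2 * k + 1)) / (q - q⁻¹) := by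
    rw [eq_div_iff hq1, mul_comm, qint_formula]
  rw [hqint]
  rw [inv_div]
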